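/- Let q = 2^n (n ≥ 1). The subgroup H_q = {(b, I₂) : b ∈ F_q²} of AGL(2, q²) is a subgroup perfect code of AGL(2, q²): there exists an inverse-closed subset S of AGL(2,q²) \ {e} such that H_q is a perfect code of the Cayley graph Cay(AGL(2,q²), S). -/

import Mathlib

open Matrix

/-- The affine group `F² ⋊ GL₂(F)`: pairs `(v, m)` with multiplication
`(a, A)(b, B) = (a + Ab, AB)`. -/
@[ext]
structure Aff (F : Type*) [Field F] where
  v : Fin 2 → F
  m : GL (Fin 2) F

namespace Aff

variable {F : Type*} [Field F]

instance : Mul (Aff F) :=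
  ⟨fun g h => ⟨g.v + (g.m : Matrix (Fin 2) (Fin 2) F) *ᵥ h.v, g.m * h.m⟩⟩

instance : One (Aff F) := ⟨⟨0, 1⟩⟩

instance : Inv (Aff F) :=
  ⟨fun g => ⟨-(((g.m⁻¹ : GL (Fin 2) F) : Matrix (Fin 2) (Fin 2) F) *ᵥ g.v), g.m⁻¹⟩⟩

@[simp] lemma mul_v (g h : Aff F) :
    (g * h).v = g.v + (g.m : Matrix (Fin 2) (Fin 2) F) *ᵥ h.v := rfl
@[simp] lemma mul_m (g h : Aff F) : (g * h).m = g.m * h.m := rfl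
@[simp] lemma one_v : (1 : Aff F).v = 0 := rfl
@[simp] lemma one_m : (1 : Aff F).m = 1 := rfl
@[simp] lemma inv_v (g : Aff F) :
    (g⁻¹).v = -(((g.m⁻¹ : GL (Fin 2) F) : Matrix (Fin 2) (Fin 2) F) *ᵥ g.v) := rfl
@[simp] lemma inv_m (g : Aff F) : (g⁻¹).m = g.m⁻¹ := rfl

instance : Group (Aff F) where
  mul_assoc a b c := by
    ext : 1
    · simp only [mul_v, mul_m, Matrix.mulVec_add, Matrix.mulVec_mulVec, add_assoc, Units.val_mul]
    · simp only [mul_m, mul_assoc]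
  one_mul a := by ext : 1 <;> simp
  mul_one a := by ext : 1 <;> simp
  inv_mul_cancel a := by
    ext : 1 <;> simp [Matrix.mulVec_mulVec, ← Units.val_mul]

end Aff

/-- `C` is a perfect code of the Cayley graph `Cay(G, S)`:
`C` is independent and every vertex outside `C` has exactly one neighbor in `C`,
where `g` and `h` are adjacent iff `h * g⁻¹ ∈ S`. -/
def IsPerfectCode {G : Type*} [Group G] (S : Set G) (C : Set G) : Prop :=
  (∀ c ∈ C, ∀ c' ∈ C, c ≠ c' → c' * c⁻¹ ∉ S) ∧
  ∀ g ∉ C, ∃! c, c ∈ C ∧ c * g⁻¹ ∈ S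

/-- The subgroup `H_q` of translations by vectors with entries in the subfield. -/
def Hq (F K : Type*) [Field F] [Field K] [Algebra F K] : Set (Aff K) :=
  {g : Aff K | (∀ i, g.v i ∈ Set.range (algebraMap F K)) ∧ g.m = 1}

open Module Submodule in
/-- Two subspaces of the same finite dimension have a common complement. -/
theorem exists_common_compl {F V : Type*} [Field F] [AddCommGroup V] [Module F V]
    [FiniteDimensional F V] (W₁ W₂ : Submodule F V)
    (h : finrank F W₁ = finrank F W₂) :
    ∃ U : Submodule F V, (U ⊓ W₁ = ⊥ ∧ U ⊔ W₁ = ⊤) ∧ (U ⊓ W₂ = ⊥ ∧ U ⊔ W₂ = ⊤) := by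
  classical
  obtain ⟨E, hE⟩ := (W₁ ⊓ W₂).exists_isCompl
  set D := W₁ ⊓ W₂ with hD
  set C₁ : Submodule F V := W₁ ⊓ E with hC₁def
  set C₂ : Submodule F V := W₂ ⊓ E with hC₂def
  have hC₁W : C₁ ⊔ D = W₁ := by
    apply le_antisymm (sup_le inf_le_left inf_le_left)
    intro x hx
    obtain ⟨d, hd, e, he, hde⟩ := Submodule.mem_sup.1 (hE.codisjoint.eq_top ▸ Submodule.mem_top (x := x))
    have he1 : e ∈ C₁ := ⟨by rw [← hde] at hx; simpa using Submodule.sub_mem _ hx hd.1, he⟩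
    rw [← hde]
    exact Submodule.add_mem _ (Submodule.mem_sup_right hd) (Submodule.mem_sup_left he1)
  have hC₂W : C₂ ⊔ D = W₂ := by
    apply le_antisymm (sup_le inf_le_left inf_le_right)
    intro x hx
    obtain ⟨d, hd, e, he, hde⟩ := Submodule.mem_sup.1 (hE.codisjoint.eq_top ▸ Submodule.mem_top (x := x))
    have he1 : e ∈ C₂ := ⟨by rw [← hde] at hx; simpa using Submodule.sub_mem _ hx hd.2, he⟩
    rw [← hde]
    exact Submodule.add_mem _ (Submodule.mem_sup_right hd) (Submodule.mem_sup_left he1)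
  have hC₁D : C₁ ⊓ D = ⊥ := by
    rw [eq_bot_iff]
    rintro x ⟨⟨-, hxE⟩, hxD⟩
    have h01 : x ∈ D ⊓ E := ⟨hxD, hxE⟩
    rwa [hE.disjoint.eq_bot] at h01
  have hC₂D : C₂ ⊓ D = ⊥ := by
    rw [eq_bot_iff]
    rintro x ⟨⟨-, hxE⟩, hxD⟩
    have h01 : x ∈ D ⊓ E := ⟨hxD, hxE⟩
    rwa [hE.disjoint.eq_bot] at h01
  have hfr : finrank F C₁ = finrank F C₂ := by
    have e1 := Submodule.finrank_sup_add_finrank_inf_eq C₁ D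
    have e2 := Submodule.finrank_sup_add_finrank_inf_eq C₂ D
    rw [hC₁W, hC₁D] at e1
    rw [hC₂W, hC₂D] at e2
    simp only [finrank_bot] at e1 e2
    omega
  obtain ⟨ψ⟩ := FiniteDimensional.nonempty_linearEquiv_of_finrank_eq hfr
  set g : C₁ →ₗ[F] V := C₁.subtype + C₂.subtype.comp ψ.toLinearMap with hg
  have hgapply : ∀ c : C₁, g c = (c : V) + (ψ c : V) := fun c => rfl
  set G : Submodule F V := LinearMap.range g with hG
  obtain ⟨C₀, hC₀⟩ := (W₁ ⊔ W₂).exists_isCompl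
  refine ⟨C₀ ⊔ G, ⟨?_, ?_⟩, ?_, ?_⟩
  · -- (C₀ ⊔ G) ⊓ W₁ = ⊥
    rw [eq_bot_iff]
    rintro x ⟨hxU, hxW⟩
    obtain ⟨c₀, hc₀, y, hy, rfl⟩ := Submodule.mem_sup.1 hxU
    obtain ⟨c, rfl⟩ := hy
    rw [hgapply] at hxW ⊢
    have hcW₁ : (c : V) ∈ W₁ := c.2.1
    have hψW₂ : (ψ c : V) ∈ W₂ := (ψ c).2.1
    have hc₀' : c₀ ∈ W₁ ⊔ W₂ := by
      have : c₀ = (c₀ + ((c : V) + (ψ c : V))) - (c : V) - (ψ c : V) := by abel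
      rw [this]
      exact Submodule.sub_mem _ (Submodule.sub_mem _ (Submodule.mem_sup_left hxW)
        (Submodule.mem_sup_left hcW₁)) (Submodule.mem_sup_right hψW₂)
    have hc₀0 : c₀ = 0 := by
      have h01 : c₀ ∈ C₀ ⊓ (W₁ ⊔ W₂) := ⟨hc₀, hc₀'⟩
      rwa [hC₀.symm.disjoint.eq_bot, Submodule.mem_bot] at h01
    subst hc₀0
    rw [zero_add] at hxW
    have hψD : (ψ c : V) ∈ D := by
      refine ⟨?_, hψW₂⟩
      have : (ψ c : V) = ((c : V) + (ψ c : V)) - (c : V) := by abel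
      rw [this]; exact Submodule.sub_mem _ hxW hcW₁
    have hψE : (ψ c : V) ∈ E := (ψ c).2.2
    have : (ψ c : V) = 0 := by
      have : (ψ c : V) ∈ D ⊓ E := ⟨hψD, hψE⟩
      rwa [hE.disjoint.eq_bot, Submodule.mem_bot] at this
    have hψ0 : ψ c = 0 := Subtype.ext this
    have hc0 : c = 0 := by
      apply ψ.injective; rw [hψ0, map_zero]
    rw [hψ0, hc0]; simp
  · -- (C₀ ⊔ G) ⊔ W₁ = ⊤
    rw [eq_top_iff, ← hC₀.symm.codisjoint.eq_top]
    refine sup_le (le_sup_of_le_left le_sup_left) (sup_le ?_ ?_)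
    · exact le_sup_right
    · -- W₂ ≤ (C₀ ⊔ G) ⊔ W₁
      intro w hw
      rw [← hC₂W] at hw
      obtain ⟨c₂, hc₂, d, hd, rfl⟩ := Submodule.mem_sup.1 hw
      have : c₂ = g (ψ.symm ⟨c₂, hc₂⟩) - ((ψ.symm ⟨c₂, hc₂⟩ : C₁) : V) := by
        rw [hgapply]; simp
      refine Submodule.add_mem _ ?_ (Submodule.mem_sup_right hd.1)
      rw [this]
      refine Submodule.sub_mem _ ?_ ?_
      · exact Submodule.mem_sup_left (Submodule.mem_sup_right ⟨_, rfl⟩)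
      · exact Submodule.mem_sup_right (ψ.symm ⟨c₂, hc₂⟩).2.1
  · -- (C₀ ⊔ G) ⊓ W₂ = ⊥
    rw [eq_bot_iff]
    rintro x ⟨hxU, hxW⟩
    obtain ⟨c₀, hc₀, y, hy, rfl⟩ := Submodule.mem_sup.1 hxU
    obtain ⟨c, rfl⟩ := hy
    rw [hgapply] at hxW ⊢
    have hcW₁ : (c : V) ∈ W₁ := c.2.1
    have hψW₂ : (ψ c : V) ∈ W₂ := (ψ c).2.1
    have hc₀' : c₀ ∈ W₁ ⊔ W₂ := by
      have : c₀ = (c₀ + ((c : V) + (ψ c : V))) - (c : V) - (ψ c : V) := by abel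
      rw [this]
      exact Submodule.sub_mem _ (Submodule.sub_mem _ (Submodule.mem_sup_right hxW)
        (Submodule.mem_sup_left hcW₁)) (Submodule.mem_sup_right hψW₂)
    have hc₀0 : c₀ = 0 := by
      have h01 : c₀ ∈ C₀ ⊓ (W₁ ⊔ W₂) := ⟨hc₀, hc₀'⟩
      rwa [hC₀.symm.disjoint.eq_bot, Submodule.mem_bot] at h01
    subst hc₀0
    rw [zero_add] at hxW
    have hcD : (c : V) ∈ D := by
      refine ⟨hcW₁, ?_⟩
      have : (c : V) = ((c : V) + (ψ c : V)) - (ψ c : V) := by abel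
      rw [this]; exact Submodule.sub_mem _ hxW hψW₂
    have hcE : (c : V) ∈ E := c.2.2
    have hc0 : (c : V) = 0 := by
      have : (c : V) ∈ D ⊓ E := ⟨hcD, hcE⟩
      rwa [hE.disjoint.eq_bot, Submodule.mem_bot] at this
    have : c = 0 := Subtype.ext hc0
    rw [this]; simp
  · -- (C₀ ⊔ G) ⊔ W₂ = ⊤
    rw [eq_top_iff, ← hC₀.symm.codisjoint.eq_top]
    refine sup_le (le_sup_of_le_left le_sup_left) (sup_le ?_ ?_)
    · -- W₁ ≤ (C₀ ⊔ G) ⊔ W₂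
      intro w hw
      rw [← hC₁W] at hw
      obtain ⟨c₁, hc₁, d, hd, rfl⟩ := Submodule.mem_sup.1 hw
      have : c₁ = g ⟨c₁, hc₁⟩ - ((ψ ⟨c₁, hc₁⟩ : C₂) : V) := by
        rw [hgapply]; simp
      refine Submodule.add_mem _ ?_ (Submodule.mem_sup_right hd.2)
      rw [this]
      refine Submodule.sub_mem _ ?_ ?_
      · exact Submodule.mem_sup_left (Submodule.mem_sup_right ⟨_, rfl⟩)
      · exact Submodule.mem_sup_right (ψ ⟨c₁, hc₁⟩).2.1
    · exact le_sup_right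

namespace PCaux

open Module Submodule

variable (F : Type*) {K : Type*} [Field F] [Field K] [Algebra F K]

/-- `A` acting on `K²` as an `F`-linear map. -/
noncomputable def toF (A : GL (Fin 2) K) : (Fin 2 → K) →ₗ[F] (Fin 2 → K) :=
  LinearMap.restrictScalars F ((A : Matrix (Fin 2) (Fin 2) K).mulVecLin)

theorem toF_apply (A : GL (Fin 2) K) (x : Fin 2 → K) :
    toF F A x = (A : Matrix (Fin 2) (Fin 2) K) *ᵥ x := rfl

theorem toF_mul (A B : GL (Fin 2) K) : toF F (A * B) = (toF F A).comp (toF F B) :=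
  LinearMap.ext fun x => by
    simp only [toF_apply, LinearMap.comp_apply, Matrix.mulVec_mulVec, Units.val_mul]

theorem toF_one : toF F (1 : GL (Fin 2) K) = LinearMap.id :=
  LinearMap.ext fun x => by simp [toF_apply, Units.val_one, Matrix.one_mulVec]

variable (K) in
/-- The inclusion `F² → K²`. -/
noncomputable def Wphi : (Fin 2 → F) →ₗ[F] (Fin 2 → K) :=
  LinearMap.pi fun i => (Algebra.linearMap F K).comp (LinearMap.proj i)

variable (K) in
/-- `F²` as an `F`-subspace of `K²`. -/
noncomputable def Wsub : Submodule F (Fin 2 → K) := LinearMap.range (Wphi F K)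

theorem mem_Wsub (x : Fin 2 → K) :
    x ∈ Wsub F K ↔ ∀ i, x i ∈ Set.range (algebraMap F K) := by
  constructor
  · rintro ⟨y, rfl⟩ i
    exact ⟨y i, rfl⟩
  · intro h
    exact ⟨fun i => (h i).choose, funext fun i => (h i).choose_spec⟩

theorem Wsub_finrank : Module.finrank F (Wsub F K) = 2 := by
  rw [Wsub, LinearMap.finrank_range_of_inj, Module.finrank_pi]
  · simp
  · intro a b hab
    funext i
    have h := congrFun hab i
    simp only [Wphi, LinearMap.pi_apply, LinearMap.comp_apply, LinearMap.proj_apply,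
      Algebra.linearMap_apply] at h
    exact (algebraMap F K).injective h


theorem exists_notMem_two {R M : Type*} [Ring R] [AddCommGroup M] [Module R M]
    (p q : Submodule R M) (hp : p ≠ ⊤) (hq : q ≠ ⊤) : ∃ c : M, c ∉ p ∧ c ∉ q := by
  have hxp : ∃ x : M, x ∉ p := by
    by_contra h; push_neg at h; exact hp (Submodule.eq_top_iff'.2 h)
  have hyq : ∃ y : M, y ∉ q := by
    by_contra h; push_neg at h; exact hq (Submodule.eq_top_iff'.2 h)
  obtain ⟨x, hx⟩ := hxp
  obtain ⟨y, hy⟩ := hyq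
  by_cases hxq : x ∈ q
  · by_cases hyp : y ∈ p
    · refine ⟨x + y, fun h => hx ?_, fun h => hy ?_⟩
      · have := Submodule.sub_mem p h hyp; simpa using this
      · have := Submodule.sub_mem q h hxq; simpa using this
    · exact ⟨y, hyp, hy⟩
  · exact ⟨x, hx, hxq⟩

set_option maxHeartbeats 1000000 in
theorem exists_invariant_compl (hK : Module.finrank F K = 2) (h2 : (1 + 1 : K) = 0)
    (A : GL (Fin 2) K) (hA : A * A = 1) :
    ∃ U : Submodule F (Fin 2 → K),
      (U ⊓ Wsub F K = ⊥ ∧ U ⊔ Wsub F K = ⊤) ∧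
        Submodule.map (toF F A) U = U := by
  classical
  haveI : FiniteDimensional F K := FiniteDimensional.of_finrank_eq_succ (n := 1) (by omega)
  set N : Matrix (Fin 2) (Fin 2) K := (A : Matrix (Fin 2) (Fin 2) K) - 1 with hN
  have hA2 : (A : Matrix (Fin 2) (Fin 2) K) * (A : Matrix (Fin 2) (Fin 2) K) = 1 := by
    rw [← Units.val_mul, hA, Units.val_one]
  have haddself : ∀ M : Matrix (Fin 2) (Fin 2) K, M + M = 0 := by
    intro M; ext i j
    have : M i j + M i j = (1 + 1) * M i j := by ring
    simp [Matrix.add_apply, this, h2]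
  have hN2 : N * N = 0 := by
    have expand : N * N = (A : Matrix (Fin 2) (Fin 2) K) * (A : Matrix (Fin 2) (Fin 2) K) -
        ((A : Matrix (Fin 2) (Fin 2) K) + (A : Matrix (Fin 2) (Fin 2) K)) + 1 := by
      rw [hN]; noncomm_ring
    rw [expand, hA2, haddself, sub_zero, haddself]
  set NK : (Fin 2 → K) →ₗ[K] (Fin 2 → K) := N.mulVecLin with hNK
  have hNK2 : ∀ x, NK (NK x) = 0 := by
    intro x
    simp only [hNK, Matrix.mulVecLin_apply, Matrix.mulVec_mulVec, hN2, Matrix.zero_mulVec]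
  set NF : (Fin 2 → K) →ₗ[F] (Fin 2 → K) := NK.restrictScalars F with hNF
  have hNFapp : ∀ x, NF x = NK x := fun x => rfl
  have htoF : ∀ x, toF F A x = x + NF x := by
    intro x
    rw [toF_apply, hNFapp]
    show _ = x + N *ᵥ x
    have hAval : (A : Matrix (Fin 2) (Fin 2) K) = 1 + N := by rw [hN]; abel
    rw [hAval, Matrix.add_mulVec, Matrix.one_mulVec]
  by_cases hA1 : A = 1
  · obtain ⟨U, hU⟩ := (Wsub F K).exists_isCompl
    refine ⟨U, ⟨?_, ?_⟩, ?_⟩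
    · rw [inf_comm]; exact hU.disjoint.eq_bot
    · rw [sup_comm]; exact hU.codisjoint.eq_top
    · rw [hA1, toF_one, Submodule.map_id]
  -- A ≠ 1
  have hN0 : N ≠ 0 := by
    intro h0
    exact hA1 (Units.ext (by rw [sub_eq_zero] at h0; rw [h0, Units.val_one]))
  have frVK : Module.finrank K (Fin 2 → K) = 2 := by simp [Module.finrank_pi]
  have frV : Module.finrank F (Fin 2 → K) = 4 := by
    rw [Module.finrank_pi_fintype]
    simp [hK]
  have hrange_le_ker : LinearMap.range NK ≤ LinearMap.ker NK := by
    rintro y ⟨x, rfl⟩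
    exact LinearMap.mem_ker.2 (hNK2 x)
  have hNKne : NK ≠ 0 := by
    intro h
    apply hN0
    ext i j
    have h1 : NK (Pi.single j 1) = 0 := by rw [h]; rfl
    have h2' : N *ᵥ Pi.single j 1 = 0 := h1
    rw [Matrix.mulVec_single_one] at h2'
    have := congrFun h2' i
    simpa using this
  have frkerK : Module.finrank K (LinearMap.ker NK) = 1 := by
    have hrn := LinearMap.finrank_range_add_finrank_ker NK
    rw [frVK] at hrn
    have hle : Module.finrank K (LinearMap.range NK) ≤ Module.finrank K (LinearMap.ker NK) :=
      Submodule.finrank_mono hrange_le_ker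
    have hrb : LinearMap.range NK ≠ ⊥ := by
      intro h
      apply hNKne
      apply LinearMap.ext
      intro x
      have hm : NK x ∈ LinearMap.range NK := ⟨x, rfl⟩
      rw [h, Submodule.mem_bot] at hm
      simpa using hm
    have hpos : Module.finrank K (LinearMap.range NK) ≠ 0 :=
      fun h => hrb (Submodule.finrank_eq_zero.1 h)
    omega
  -- a nonzero element of the kernel line
  have hkerne : LinearMap.ker NK ≠ ⊥ := by
    intro h
    rw [h] at frkerK
    simp [finrank_bot] at frkerK
  -- span fact generator : for any nonzero element of ker NK, it spans
  have hspanK : ∀ e : Fin 2 → K, e ∈ LinearMap.ker NK → e ≠ 0 →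
      LinearMap.ker NK = Submodule.span K {e} := by
    intro e heK he0
    refine (Submodule.eq_of_le_of_finrank_le ?_ ?_).symm
    · rw [Submodule.span_le, Set.singleton_subset_iff]; exact heK
    · rw [frkerK, finrank_span_singleton he0]
  obtain ⟨e₀, he₀K, he₀0⟩ := (Submodule.ne_bot_iff _).1 hkerne
  have hmemker_iff : ∀ x : Fin 2 → K, x ∈ LinearMap.ker NF ↔ x ∈ LinearMap.ker NK :=
    fun x => Iff.rfl
  have frLF : Module.finrank F (LinearMap.ker NF) = 2 := by
    set φ : K →ₗ[F] (Fin 2 → K) :=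
      (LinearMap.toSpanSingleton K (Fin 2 → K) e₀).restrictScalars F with hφ
    have hφr : LinearMap.range φ = LinearMap.ker NF := by
      ext x
      rw [LinearMap.mem_range, hmemker_iff, hspanK e₀ he₀K he₀0, Submodule.mem_span_singleton]
      constructor
      · rintro ⟨k, rfl⟩; exact ⟨k, rfl⟩
      · rintro ⟨k, rfl⟩; exact ⟨k, rfl⟩
    rw [← hφr, LinearMap.finrank_range_of_inj, hK]
    intro a b hab
    have hab' : (a - b) • e₀ = 0 := by
      rw [sub_smul]
      simp only [hφ, LinearMap.restrictScalars_apply, LinearMap.toSpanSingleton_apply] at hab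
      rw [hab, sub_self]
    rcases smul_eq_zero.1 hab' with h | h
    · exact sub_eq_zero.1 h
    · exact absurd h he₀0
  have hfix : ∀ x ∈ LinearMap.ker NF, toF F A x = x := by
    intro x hx
    rw [htoF, LinearMap.mem_ker.1 hx, add_zero]
  by_cases hWL : Wsub F K ⊓ LinearMap.ker NF = ⊥
  · -- easy case : the kernel line is a complement
    refine ⟨LinearMap.ker NF, ⟨?_, ?_⟩, ?_⟩
    · rw [inf_comm]; exact hWL
    · apply Submodule.eq_top_of_finrank_eq
      have hsi := Submodule.finrank_sup_add_finrank_inf_eq (LinearMap.ker NF) (Wsub F K)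
      rw [inf_comm] at hWL
      rw [hWL, finrank_bot, add_zero, frLF, Wsub_finrank] at hsi
      rw [hsi, frV]
    · apply le_antisymm
      · rintro y ⟨x, hx, rfl⟩
        rw [hfix x hx]; exact hx
      · intro x hx
        exact ⟨x, hx, hfix x hx⟩
  -- hard case
  obtain ⟨e, heWL, he0⟩ := (Submodule.ne_bot_iff _).1 hWL
  have heW : e ∈ Wsub F K := heWL.1
  have heL : e ∈ LinearMap.ker NF := heWL.2
  have hmem : ∀ x ∈ LinearMap.ker NF, ∃ k : K, k • e = x := by
    intro x hx
    rw [hmemker_iff, hspanK e ((hmemker_iff e).1 heL) he0, Submodule.mem_span_singleton] at hx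
    exact hx
  have hWnotle : ¬ (Wsub F K ≤ LinearMap.ker NF) := by
    intro hle
    apply hN0
    ext i j
    have hsingle : (Pi.single j 1 : Fin 2 → K) ∈ Wsub F K := by
      rw [mem_Wsub]
      intro i'
      by_cases h : i' = j
      · subst h; rw [Pi.single_eq_same]; exact ⟨1, map_one _⟩
      · rw [Pi.single_eq_of_ne h]; exact ⟨0, map_zero _⟩
    have h1 : NF (Pi.single j 1) = 0 := LinearMap.mem_ker.1 (hle hsingle)
    have h2' : N *ᵥ Pi.single j 1 = 0 := h1
    rw [Matrix.mulVec_single_one] at h2'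
    have := congrFun h2' i
    simpa using this
  have frWL1 : Module.finrank F ((Wsub F K ⊓ LinearMap.ker NF : Submodule F (Fin 2 → K))) = 1 := by
    have hne0 : Module.finrank F ((Wsub F K ⊓ LinearMap.ker NF : Submodule F (Fin 2 → K))) ≠ 0 :=
      fun h => hWL (Submodule.finrank_eq_zero.1 h)
    have hlt : Module.finrank F ((Wsub F K ⊓ LinearMap.ker NF : Submodule F (Fin 2 → K))) < 2 := by
      by_contra hge
      push_neg at hge
      have heq : Wsub F K ⊓ LinearMap.ker NF = Wsub F K :=
        Submodule.eq_of_le_of_finrank_le inf_le_left (by rw [Wsub_finrank]; exact hge)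
      apply hWnotle
      intro x hx
      rw [← heq] at hx
      exact hx.2
    omega
  have hFe : Wsub F K ⊓ LinearMap.ker NF = Submodule.span F {e} := by
    refine (Submodule.eq_of_le_of_finrank_le ?_ ?_).symm
    · rw [Submodule.span_le, Set.singleton_subset_iff]; exact heWL
    · rw [frWL1, finrank_span_singleton he0]
  obtain ⟨g, hgW, hgne⟩ : ∃ g ∈ Wsub F K, g ∉ Submodule.span F {e} := by
    by_contra h
    push_neg at h
    have hle : Wsub F K ≤ Submodule.span F {e} := h
    have := Submodule.finrank_mono hle
    rw [Wsub_finrank, finrank_span_singleton he0] at this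
    omega
  have hg0 : g ≠ 0 := fun h => hgne (h ▸ Submodule.zero_mem _)
  have hspan_eg : Submodule.span F {e} ⊔ Submodule.span F {g} = Wsub F K := by
    have hinf : Submodule.span F {e} ⊓ Submodule.span F {g} = ⊥ := by
      rw [eq_bot_iff]
      rintro x ⟨hxe, hxg⟩
      obtain ⟨s, rfl⟩ := Submodule.mem_span_singleton.1 hxg
      rw [Submodule.mem_bot]
      by_cases hs : s = 0
      · rw [hs, zero_smul]
      · exfalso
        apply hgne
        have : g = s⁻¹ • s • g := by rw [smul_smul, inv_mul_cancel₀ hs, one_smul]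
        rw [this]
        exact Submodule.smul_mem _ _ hxe
    apply Submodule.eq_of_le_of_finrank_le
    · exact sup_le (Submodule.span_le.2 (Set.singleton_subset_iff.2 heW))
        (Submodule.span_le.2 (Set.singleton_subset_iff.2 hgW))
    · have hsi := Submodule.finrank_sup_add_finrank_inf_eq
        (Submodule.span F {e}) (Submodule.span F {g})
      rw [hinf, finrank_bot, add_zero, finrank_span_singleton he0,
        finrank_span_singleton hg0] at hsi
      rw [Wsub_finrank, hsi]
  set Ng : Fin 2 → K := NF g with hNgdef
  have hNg0 : Ng ≠ 0 := by
    intro h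
    apply hgne
    rw [← hFe]
    exact ⟨hgW, LinearMap.mem_ker.2 h⟩
  have hNgL : Ng ∈ LinearMap.ker NF := LinearMap.mem_ker.2 (hNK2 g)
  obtain ⟨ζ, hζ⟩ := hmem Ng hNgL
  have hζ0 : ζ ≠ 0 := by
    intro h
    rw [h, zero_smul] at hζ
    exact hNg0 hζ.symm
  have hNW : Submodule.map NF (Wsub F K) = Submodule.span F {Ng} := by
    rw [← hspan_eg, Submodule.map_sup, Submodule.map_span, Submodule.map_span,
      Set.image_singleton, Set.image_singleton, LinearMap.mem_ker.1 heL,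
      Submodule.span_zero_singleton, bot_sup_eq]
  -- choose the scalar c
  have hone_ne : Submodule.span F {(1 : K)} ≠ ⊤ := by
    intro htop
    have h1 : Module.finrank F (Submodule.span F {(1 : K)}) = 1 :=
      finrank_span_singleton one_ne_zero
    rw [htop, finrank_top, hK] at h1
    omega
  have hzeta_ne : Submodule.span F {ζ} ≠ ⊤ := by
    intro htop
    have h1 : Module.finrank F (Submodule.span F {ζ}) = 1 :=
      finrank_span_singleton hζ0
    rw [htop, finrank_top, hK] at h1
    omega
  obtain ⟨c, hc1, hcζ⟩ := exists_notMem_two _ _ hone_ne hzeta_ne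
  have hc0 : c ≠ 0 := fun h => hc1 (h ▸ Submodule.zero_mem _)
  set M : Submodule F (Fin 2 → K) := Submodule.span F {c • e} with hMdef
  have hce0 : c • e ≠ 0 := by
    intro h
    rcases smul_eq_zero.1 h with h' | h'
    · exact hc0 h'
    · exact he0 h'
  -- scalar towers : s • x = algebraMap s • x
  have hsmul : ∀ (s : F) (x : Fin 2 → K), s • x = algebraMap F K s • x :=
    fun s x => (algebraMap_smul K s x).symm
  have hMe : M ⊓ Submodule.span F {e} = ⊥ := by
    rw [eq_bot_iff]
    rintro x ⟨hxM, hxe⟩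
    obtain ⟨s, hs⟩ := Submodule.mem_span_singleton.1 hxM
    obtain ⟨t, ht⟩ := Submodule.mem_span_singleton.1 hxe
    rw [Submodule.mem_bot]
    by_cases hs0 : s = 0
    · rw [← hs, hs0, zero_smul]
    · exfalso
      apply hc1
      have heq : (algebraMap F K s * c) • e = algebraMap F K t • e := by
        rw [mul_smul, ← hsmul, ← hsmul, hs, ht]
      have heq2 : algebraMap F K s * c = algebraMap F K t := by
        have hz : (algebraMap F K s * c - algebraMap F K t) • e = 0 := by
          rw [sub_smul, heq, sub_self]
        rcases smul_eq_zero.1 hz with h' | h'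
        · exact sub_eq_zero.1 h'
        · exact absurd h' he0
      have hsK : algebraMap F K s ≠ 0 := fun hh => hs0 ((algebraMap F K).injective
        (by rw [hh, map_zero]))
      refine Submodule.mem_span_singleton.2 ⟨t / s, ?_⟩
      rw [Algebra.smul_def, mul_one, map_div₀]
      field_simp
      first
      | linear_combination heq2
      | linear_combination -heq2
  have hMNg : M ⊓ Submodule.span F {Ng} = ⊥ := by
    rw [eq_bot_iff]
    rintro x ⟨hxM, hxg'⟩
    obtain ⟨s, hs⟩ := Submodule.mem_span_singleton.1 hxM
    obtain ⟨t, ht⟩ := Submodule.mem_span_singleton.1 hxg'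
    rw [Submodule.mem_bot]
    by_cases hs0 : s = 0
    · rw [← hs, hs0, zero_smul]
    · exfalso
      apply hcζ
      have heq : (algebraMap F K s * c) • e = (algebraMap F K t * ζ) • e := by
        rw [mul_smul, mul_smul, ← hsmul, ← hsmul, hs, hζ, ht]
      have heq2 : algebraMap F K s * c = algebraMap F K t * ζ := by
        have hz : (algebraMap F K s * c - algebraMap F K t * ζ) • e = 0 := by
          rw [sub_smul, heq, sub_self]
        rcases smul_eq_zero.1 hz with h' | h'
        · exact sub_eq_zero.1 h'
        · exact absurd h' he0
      have hsK : algebraMap F K s ≠ 0 := fun hh => hs0 ((algebraMap F K).injective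
        (by rw [hh, map_zero]))
      refine Submodule.mem_span_singleton.2 ⟨t / s, ?_⟩
      rw [Algebra.smul_def, map_div₀]
      field_simp
      linear_combination -heq2
  have hMle : M ≤ LinearMap.ker NF := by
    rw [hMdef, Submodule.span_le, Set.singleton_subset_iff]
    refine LinearMap.mem_ker.2 ?_
    have hNFe : NF e = 0 := LinearMap.mem_ker.1 heL
    have hNKe : NK e = 0 := hNFe
    show NK (c • e) = 0
    rw [NK.map_smul c e, hNKe, smul_zero]
  have hLM_e : M ⊔ Submodule.span F {e} = LinearMap.ker NF := by
    apply Submodule.eq_of_le_of_finrank_le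
    · exact sup_le hMle (Submodule.span_le.2 (Set.singleton_subset_iff.2 heL))
    · have hsi := Submodule.finrank_sup_add_finrank_inf_eq M (Submodule.span F {e})
      rw [hMe, finrank_bot, add_zero, finrank_span_singleton hce0,
        finrank_span_singleton he0] at hsi
      rw [frLF, hsi]
  have hLM_Ng : M ⊔ Submodule.span F {Ng} = LinearMap.ker NF := by
    apply Submodule.eq_of_le_of_finrank_le
    · exact sup_le hMle (Submodule.span_le.2 (Set.singleton_subset_iff.2 hNgL))
    · have hsi := Submodule.finrank_sup_add_finrank_inf_eq M (Submodule.span F {Ng})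
      rw [hMNg, finrank_bot, add_zero, finrank_span_singleton hce0,
        finrank_span_singleton hNg0] at hsi
      rw [frLF, hsi]
  set CM : Submodule F (Fin 2 → K) := Submodule.comap NF M with hCMdef
  have hLleCM : LinearMap.ker NF ≤ CM := by
    intro x hx
    rw [hCMdef, Submodule.mem_comap, LinearMap.mem_ker.1 hx]
    exact Submodule.zero_mem _
  have hMleCM : M ≤ CM := hMle.trans hLleCM
  have hCMW : CM ⊔ Wsub F K = ⊤ := by
    rw [eq_top_iff]
    rintro x -
    have hx' : NF x ∈ LinearMap.ker NF := LinearMap.mem_ker.2 (hNK2 x)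
    rw [← hLM_Ng] at hx'
    obtain ⟨m, hm, ng, hng, hsum⟩ := Submodule.mem_sup.1 hx'
    rw [← hNW] at hng
    obtain ⟨w, hw, rfl⟩ := hng
    refine Submodule.mem_sup.2 ⟨x - w, ?_, w, hw, by abel⟩
    rw [hCMdef, Submodule.mem_comap, map_sub, ← hsum, add_sub_cancel_right]
    exact hm
  obtain ⟨CL, hCL⟩ := (LinearMap.ker NF).exists_isCompl
  set B : Submodule F (Fin 2 → K) := CL ⊓ CM with hBdef
  have hBsup : B ⊔ LinearMap.ker NF = CM := by
    apply le_antisymm (sup_le inf_le_right hLleCM)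
    intro x hx
    obtain ⟨l, hl, cl, hcl, rfl⟩ := Submodule.mem_sup.1
      (hCL.codisjoint.eq_top ▸ Submodule.mem_top (x := x))
    have hclCM : cl ∈ CM := by
      have : cl = (l + cl) - l := by abel
      rw [this]
      exact Submodule.sub_mem _ hx (hLleCM hl)
    exact Submodule.add_mem _ (Submodule.mem_sup_right hl) (Submodule.mem_sup_left ⟨hcl, hclCM⟩)
  have hBL : B ⊓ LinearMap.ker NF = ⊥ := by
    rw [eq_bot_iff]
    rintro x ⟨⟨hxCL, -⟩, hxk⟩
    have h01 : x ∈ LinearMap.ker NF ⊓ CL := ⟨hxk, hxCL⟩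
    rwa [hCL.disjoint.eq_bot] at h01
  set U : Submodule F (Fin 2 → K) := B ⊔ M with hUdef
  have hUclosed : ∀ x ∈ U, toF F A x ∈ U := by
    intro x hx
    rw [htoF]
    obtain ⟨b, hb, m, hm, rfl⟩ := Submodule.mem_sup.1 hx
    have hNFx : NF (b + m) ∈ M := by
      rw [map_add, LinearMap.mem_ker.1 (hMle hm), add_zero]
      exact Submodule.mem_comap.1 hb.2
    exact Submodule.add_mem _ hx (Submodule.mem_sup_right hNFx)
  have hUdisj : U ⊓ Wsub F K = ⊥ := by
    rw [eq_bot_iff]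
    rintro x ⟨hxU, hxW⟩
    obtain ⟨b, hb, m, hm, rfl⟩ := Submodule.mem_sup.1 hxU
    have hbWL : b ∈ Wsub F K ⊔ LinearMap.ker NF := by
      have : b = (b + m) - m := by abel
      rw [this]
      exact Submodule.sub_mem _ (Submodule.mem_sup_left hxW)
        (Submodule.mem_sup_right (hMle hm))
    obtain ⟨w, hw, l, hl, hwl⟩ := Submodule.mem_sup.1 hbWL
    have hNb : NF b ∈ M := Submodule.mem_comap.1 hb.2
    have hNbw : NF b = NF w := by
      rw [← hwl, map_add, LinearMap.mem_ker.1 hl, add_zero]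
    have hNwNg : NF w ∈ Submodule.span F {Ng} := hNW ▸ Submodule.mem_map_of_mem hw
    have hNw0 : NF w = 0 := by
      have h01 : NF w ∈ M ⊓ Submodule.span F {Ng} := ⟨hNbw ▸ hNb, hNwNg⟩
      rwa [hMNg, Submodule.mem_bot] at h01
    have hbker : b ∈ LinearMap.ker NF := LinearMap.mem_ker.2 (by rw [hNbw, hNw0])
    have hb0 : b = 0 := by
      have h01 : b ∈ B ⊓ LinearMap.ker NF := ⟨hb, hbker⟩
      rwa [hBL, Submodule.mem_bot] at h01
    rw [hb0, zero_add] at hxW ⊢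
    have hmW : m ∈ Wsub F K ⊓ LinearMap.ker NF := ⟨hxW, hMle hm⟩
    rw [hFe] at hmW
    have h01 : m ∈ M ⊓ Submodule.span F {e} := ⟨hm, hmW⟩
    rwa [hMe, Submodule.mem_bot] at h01
  have hUsup : U ⊔ Wsub F K = ⊤ := by
    have h1 : Submodule.span F {e} ≤ Wsub F K :=
      Submodule.span_le.2 (Set.singleton_subset_iff.2 heW)
    rw [eq_top_iff, ← hCMW]
    refine sup_le ?_ le_sup_right
    rw [← hBsup, ← hLM_e]
    exact sup_le (le_sup_of_le_left le_sup_left)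
      (sup_le (le_sup_of_le_left le_sup_right) (le_sup_of_le_right h1))
  refine ⟨U, ⟨hUdisj, hUsup⟩, ?_⟩
  apply le_antisymm
  · rintro y ⟨x, hx, rfl⟩
    exact hUclosed x hx
  · intro x hx
    have hAA : toF F A (toF F A x) = x := by
      rw [toF_apply, toF_apply, Matrix.mulVec_mulVec, hA2, Matrix.one_mulVec]
    exact ⟨toF F A x, hUclosed x hx, hAA⟩

theorem toF_toF_inv (A : GL (Fin 2) K) (x : Fin 2 → K) : toF F A (toF F A⁻¹ x) = x := by
  rw [← LinearMap.comp_apply, ← toF_mul, mul_inv_cancel, toF_one, LinearMap.id_apply]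

theorem toF_inv_toF (A : GL (Fin 2) K) (x : Fin 2 → K) : toF F A⁻¹ (toF F A x) = x := by
  rw [← LinearMap.comp_apply, ← toF_mul, inv_mul_cancel, toF_one, LinearMap.id_apply]

theorem map_toF_map_toF_inv (A : GL (Fin 2) K) (p : Submodule F (Fin 2 → K)) :
    Submodule.map (toF F A) (Submodule.map (toF F A⁻¹) p) = p := by
  rw [← Submodule.map_comp, ← toF_mul, mul_inv_cancel, toF_one, Submodule.map_id]

theorem map_toF_inv_map_toF (A : GL (Fin 2) K) (p : Submodule F (Fin 2 → K)) :
    Submodule.map (toF F A⁻¹) (Submodule.map (toF F A) p) = p := by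
  rw [← Submodule.map_comp, ← toF_mul, inv_mul_cancel, toF_one, Submodule.map_id]

theorem toF_injective (A : GL (Fin 2) K) : Function.Injective (toF F A) := fun x y h => by
  have h' := congrArg (toF F A⁻¹) h
  rwa [toF_inv_toF, toF_inv_toF] at h'

theorem toF_surjective (A : GL (Fin 2) K) : Function.Surjective (toF F A) :=
  fun y => ⟨toF F A⁻¹ y, toF_toF_inv F A y⟩

theorem map_toF_top (A : GL (Fin 2) K) :
    Submodule.map (toF F A) (⊤ : Submodule F (Fin 2 → K)) = ⊤ := by
  rw [Submodule.map_top]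
  exact LinearMap.range_eq_top.2 (toF_surjective F A)

theorem lemmaM (hK : Module.finrank F K = 2) (h2 : (1 + 1 : K) = 0) (A : GL (Fin 2) K) :
    ∃ U : Submodule F (Fin 2 → K),
      (U ⊓ Wsub F K = ⊥ ∧ U ⊔ Wsub F K = ⊤) ∧
      (U ⊓ Submodule.map (toF F A) (Wsub F K) = ⊥ ∧
        U ⊔ Submodule.map (toF F A) (Wsub F K) = ⊤) ∧
      (A * A = 1 → Submodule.map (toF F A) U = U) := by
  haveI : FiniteDimensional F K := FiniteDimensional.of_finrank_eq_succ (n := 1) (by omega)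
  by_cases hA : A * A = 1
  · obtain ⟨U, ⟨hd, hs⟩, hmap⟩ := exists_invariant_compl F hK h2 A hA
    have hWc : ∀ x ∈ U, toF F A x ∈ U := fun x hx => hmap ▸ Submodule.mem_map_of_mem hx
    have hAinv : A⁻¹ = A := inv_eq_of_mul_eq_one_right hA
    have hAA : ∀ z : Fin 2 → K, toF F A (toF F A z) = z := fun z => by
      have h' := toF_toF_inv F A z
      rwa [hAinv] at h'
    refine ⟨U, ⟨hd, hs⟩, ⟨?_, ?_⟩, fun _ => hmap⟩
    · rw [eq_bot_iff]
      rintro x ⟨hxU, hxAW⟩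
      obtain ⟨w, hw, rfl⟩ := hxAW
      have hwU : w ∈ U := by
        have h' := hWc _ hxU
        rwa [hAA] at h'
      have h01 : w ∈ U ⊓ Wsub F K := ⟨hwU, hw⟩
      rw [hd, Submodule.mem_bot] at h01
      rw [Submodule.mem_bot, h01, map_zero]
    · rw [eq_top_iff]
      rintro x -
      obtain ⟨u, hu, w, hw, huw⟩ := Submodule.mem_sup.1
        (hs ▸ Submodule.mem_top (x := toF F A x))
      have hx : x = toF F A u + toF F A w := by
        rw [← map_add, huw, hAA]
      rw [hx]
      exact Submodule.add_mem _ (Submodule.mem_sup_left (hWc u hu))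
        (Submodule.mem_sup_right (Submodule.mem_map_of_mem hw))
  · have hfr : Module.finrank F (Wsub F K) =
        Module.finrank F (Submodule.map (toF F A) (Wsub F K)) := by
      have heq := LinearEquiv.finrank_map_eq
        (LinearEquiv.ofLinear (toF F A) (toF F A⁻¹)
          (by rw [← toF_mul, mul_inv_cancel, toF_one])
          (by rw [← toF_mul, inv_mul_cancel, toF_one])) (Wsub F K)
      exact heq.symm
    obtain ⟨U, hU1, hU2⟩ := exists_common_compl (Wsub F K)
      (Submodule.map (toF F A) (Wsub F K)) hfr
    exact ⟨U, hU1, hU2, fun h => absurd h hA⟩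

theorem exists_family (hK : Module.finrank F K = 2) (h2 : (1 + 1 : K) = 0) :
    ∃ Ufam : GL (Fin 2) K → Submodule F (Fin 2 → K),
      (∀ A, Ufam A ⊓ Wsub F K = ⊥) ∧ (∀ A, Ufam A ⊔ Wsub F K = ⊤) ∧
      (∀ A, Ufam A⁻¹ = Submodule.map (toF F A⁻¹) (Ufam A)) := by
  classical
  choose pick hp1 hp2 hp3 using lemmaM F hK h2
  have hAsym : ∀ {X Y : GL (Fin 2) K}, WellOrderingRel X Y → ¬ WellOrderingRel Y X := by
    intro X Y hXY hYX
    exact irrefl_of WellOrderingRel X (trans_of WellOrderingRel hXY hYX)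
  set cnd : GL (Fin 2) K → Prop := fun A => A = A⁻¹ ∨ WellOrderingRel A A⁻¹ with hcnd
  refine ⟨fun A => if cnd A then pick A else Submodule.map (toF F A) (pick A⁻¹), ?_, ?_, ?_⟩
  · intro A
    by_cases h : cnd A
    · simp only [if_pos h]; exact (hp1 A).1
    · simp only [if_neg h]
      conv_lhs => rw [show Wsub F K =
        Submodule.map (toF F A) (Submodule.map (toF F A⁻¹) (Wsub F K)) from
        (map_toF_map_toF_inv F A _).symm]
      rw [← Submodule.map_inf _ (toF_injective F A), (hp2 A⁻¹).1, Submodule.map_bot]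
  · intro A
    by_cases h : cnd A
    · simp only [if_pos h]; exact (hp1 A).2
    · simp only [if_neg h]
      conv_lhs => rw [show Wsub F K =
        Submodule.map (toF F A) (Submodule.map (toF F A⁻¹) (Wsub F K)) from
        (map_toF_map_toF_inv F A _).symm]
      rw [← Submodule.map_sup, (hp2 A⁻¹).2, map_toF_top]
  · intro A
    by_cases hAe : A = A⁻¹
    · have hc1 : cnd A := Or.inl hAe
      have hc2 : cnd A⁻¹ := Or.inl (by rw [inv_inv]; exact hAe.symm)
      simp only [if_pos hc1, if_pos hc2]
      have hAmul : A * A = 1 := by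
        nth_rewrite 2 [hAe]
        exact mul_inv_cancel A
      have hMA := hp3 A hAmul
      rw [← hAe]
      exact hMA.symm
    · rcases trichotomous_of WellOrderingRel A A⁻¹ with hr | he | hr
      · have hc1 : cnd A := Or.inr hr
        have hc2 : ¬ cnd A⁻¹ := by
          rintro (h | h)
          · rw [inv_inv] at h; exact hAe h.symm
          · rw [inv_inv] at h; exact hAsym hr h
        simp only [if_pos hc1, if_neg hc2, inv_inv]
      · exact absurd he hAe
      · have hc1 : ¬ cnd A := by
          rintro (h | h)
          · exact hAe h
          · exact hAsym hr h
        have hc2 : cnd A⁻¹ := Or.inr (by rw [inv_inv]; exact hr)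
        simp only [if_pos hc2, if_neg hc1]
        rw [map_toF_inv_map_toF]

end PCaux



/-- For `q = 2^n` (`n ≥ 1`), the subgroup `H_q` of `AGL(2, q²)` is a subgroup
perfect code: there is an inverse-closed `S ⊆ AGL(2,q²) \ {e}` such that `H_q`
is a perfect code of `Cay(AGL(2,q²), S)`. -/
theorem stmt12 {F K : Type*} [Field F] [Field K] [Algebra F K] [Fintype F]
    (n : ℕ) (hn : 1 ≤ n) (hF : Fintype.card F = 2 ^ n)
    (hK : Module.finrank F K = 2) :
    ∃ S : Set (Aff K), (∀ s ∈ S, s⁻¹ ∈ S) ∧ (1 : Aff K) ∉ S ∧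
      IsPerfectCode S (Hq F K) := by
  classical
  have h2F : (1 + 1 : F) = 0 := by
    obtain ⟨p, hp⟩ := CharP.exists F
    haveI := hp
    obtain ⟨m, hprime, hcard⟩ := FiniteField.card F p
    have hpd : p ∣ 2 ^ n := by
      rw [← hF, hcard]
      exact dvd_pow_self p m.pos.ne'
    have hp2 : p = 2 :=
      (Nat.prime_dvd_prime_iff_eq hprime Nat.prime_two).1 (hprime.dvd_of_dvd_pow hpd)
    haveI : CharP F 2 := hp2 ▸ hp
    have hc2 := CharP.cast_eq_zero F 2
    rwa [Nat.cast_ofNat, ← one_add_one_eq_two] at hc2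
  have h2K : (1 + 1 : K) = 0 := by
    have h := congrArg (algebraMap F K) h2F
    rwa [map_add, _root_.map_one, map_zero] at h
  obtain ⟨Ufam, hdisj, hsup, hrel⟩ := PCaux.exists_family F hK h2K
  refine ⟨{g : Aff K | g.v ∈ Ufam g.m ∧ g ≠ 1}, ?_, ?_, ?_, ?_⟩
  · -- inverse-closed
    rintro s ⟨hsv, hs1⟩
    refine ⟨?_, fun h => hs1 (inv_eq_one.1 h)⟩
    have hmm : PCaux.toF F (s.m⁻¹) s.v ∈
        Submodule.map (PCaux.toF F (s.m⁻¹)) (Ufam s.m) :=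
      Submodule.mem_map_of_mem hsv
    have hneg := Submodule.neg_mem _ hmm
    show (s⁻¹).v ∈ Ufam ((s⁻¹).m)
    rw [Aff.inv_v, Aff.inv_m, hrel s.m]
    exact hneg
  · exact fun h => h.2 rfl
  · -- independence
    rintro c hc c' hc' hne hS
    obtain ⟨hcv, hcm⟩ := hc
    obtain ⟨hc'v, hc'm⟩ := hc'
    obtain ⟨hSv, -⟩ := hS
    have hm1 : (c' * c⁻¹).m = 1 := by
      rw [Aff.mul_m, Aff.inv_m, hcm, hc'm, inv_one, mul_one]
    have hv1 : (c' * c⁻¹).v = c'.v - c.v := by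
      rw [Aff.mul_v, Aff.inv_v, hcm, hc'm]
      simp [sub_eq_add_neg]
    rw [hm1, hv1] at hSv
    have hWm : c'.v - c.v ∈ PCaux.Wsub F K :=
      Submodule.sub_mem _ ((PCaux.mem_Wsub F _).2 hc'v) ((PCaux.mem_Wsub F _).2 hcv)
    have h01 : c'.v - c.v ∈ Ufam 1 ⊓ PCaux.Wsub F K := ⟨hSv, hWm⟩
    rw [hdisj 1, Submodule.mem_bot, sub_eq_zero] at h01
    exact hne (Aff.ext h01.symm (hcm.trans hc'm.symm))
  · -- every outside vertex has a unique neighbour in the code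
    rintro g hg
    have hWg : ¬ (g.v ∈ PCaux.Wsub F K ∧ g.m = 1) := by
      intro hh
      exact hg ⟨(PCaux.mem_Wsub F _).1 hh.1, hh.2⟩
    set b : Fin 2 → K := ((g.m⁻¹ : GL (Fin 2) K) : Matrix (Fin 2) (Fin 2) K) *ᵥ g.v with hb
    have hbtop : b ∈ Ufam g.m⁻¹ ⊔ PCaux.Wsub F K := by
      rw [hsup g.m⁻¹]; exact Submodule.mem_top
    obtain ⟨u, hu, w, hw, huw⟩ := Submodule.mem_sup.1 hbtop
    have hwb : w - b ∈ Ufam g.m⁻¹ := by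
      have hwbu : w - b = -u := by rw [← huw]; abel
      rw [hwbu]; exact Submodule.neg_mem _ hu
    refine ⟨⟨w, 1⟩, ⟨⟨(PCaux.mem_Wsub F _).1 hw, rfl⟩, ?_, ?_⟩, ?_⟩
    · -- membership of the neighbour relation in S : first component
      have hm : ((⟨w, 1⟩ : Aff K) * g⁻¹).m = g.m⁻¹ := by
        rw [Aff.mul_m, Aff.inv_m, one_mul]
      have hv : ((⟨w, 1⟩ : Aff K) * g⁻¹).v = w - b := by
        rw [Aff.mul_v, Aff.inv_v]
        show w + (((1 : GL (Fin 2) K) : Matrix (Fin 2) (Fin 2) K) *ᵥ _) = _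
        rw [Units.val_one, Matrix.one_mulVec, ← hb, sub_eq_add_neg]
      show ((⟨w, 1⟩ : Aff K) * g⁻¹).v ∈ Ufam (((⟨w, 1⟩ : Aff K) * g⁻¹).m)
      rw [hm, hv]
      exact hwb
    · -- the neighbour relation is not the identity
      intro h1
      have hcg : (⟨w, 1⟩ : Aff K) = g := mul_inv_eq_one.1 h1
      apply hWg
      constructor
      · rw [← hcg]; exact hw
      · rw [← hcg]
    · -- uniqueness
      rintro y ⟨⟨hyv, hym⟩, hySv, -⟩
      have hm : (y * g⁻¹).m = g.m⁻¹ := by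
        rw [Aff.mul_m, Aff.inv_m, hym, one_mul]
      have hv : (y * g⁻¹).v = y.v - b := by
        rw [Aff.mul_v, Aff.inv_v, hym, Units.val_one, Matrix.one_mulVec,
          ← hb, sub_eq_add_neg]
      rw [hm, hv] at hySv
      have hdiff : y.v - w ∈ Ufam g.m⁻¹ := by
        have hd : y.v - w = (y.v - b) - (w - b) := by abel
        rw [hd]; exact Submodule.sub_mem _ hySv hwb
      have hdiffW : y.v - w ∈ PCaux.Wsub F K :=
        Submodule.sub_mem _ ((PCaux.mem_Wsub F _).2 hyv) hw
      have h01 : y.v - w ∈ Ufam g.m⁻¹ ⊓ PCaux.Wsub F K := ⟨hdiff, hdiffW⟩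
      rw [hdisj _, Submodule.mem_bot, sub_eq_zero] at h01
      exact Aff.ext h01 hym
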